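/- Let θL < θH, J ≥ 1 a natural number, λ ∈ [0,1), and F, G : [θL, θH] → [0,1] continuously differentiable CDFs with F(θH) = G(θH) = 1, densities f = F′ ≥ 0 and g = G′ > 0 on (θL, θH). Define q̂*(θ) = max{0, θ − (1 − λ·F(θ)^{J} − (1−λ)·G(θ)^{J})/((1−λ)·J·G(θ)^{J−1}·g(θ))}. For a measurable bounded q : [θL, θH] → [0,∞) and u0 ≥ 0, set U(θ) = u0 + ∫_{θL}^{θ} q(x) dx and Π(q, u0) = (1−λ)·∫_{θL}^{θH} [θ·q(θ) − q(θ)²/2 − U(θ)]·G(θ)^{J−1}·g(θ) dθ + λ·∫_{θL}^{θH} [θ²/2 − U(θ)]·F(θ)^{J−1}·f(θ) dθ. Then Π(q, u0) ≤ Π(q̂*, 0) for all such (q, u0); i.e., the quality schedule q̂* together with zero rent at the bottom maximizes the seller's combined on- and off-platform profit. -/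

import Mathlib

open MeasureTheory Set Topology Filter

lemma my_intOn {a b : ℝ} {h : ℝ → ℝ}
    (hm : AEStronglyMeasurable h (volume.restrict (Ioc a b))) {K : ℝ}
    (hb : ∀ x ∈ Ioc a b, |h x| ≤ K) : IntegrableOn h (Ioc a b) := by
  have hK : IntegrableOn (fun _ : ℝ => K) (Ioc a b) :=
    integrableOn_const measure_Ioc_lt_top.ne
  refine Integrable.mono' hK hm ?_
  filter_upwards [ae_restrict_mem measurableSet_Ioc] with x hx
  simpa [Real.norm_eq_abs] using hb x hx

lemma my_quad {A B t : ℝ} (hA : 0 < A) (ht : 0 ≤ t) :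
    B*t - A*t^2/2 ≤ B*(max 0 (B/A)) - A*(max 0 (B/A))^2/2 := by
  rcases le_or_gt B 0 with hB | hB
  · rw [max_eq_left (div_nonpos_iff.2 (Or.inr ⟨hB, hA.le⟩))]
    nlinarith
  · rw [max_eq_right (div_pos hB hA).le]
    have key : B*t - A*t^2/2 ≤ B^2/(2*A) := by
      rw [le_div_iff₀ (by linarith)]
      nlinarith [sq_nonneg (B - A*t)]
    have h2 : B*(B/A) - A*(B/A)^2/2 = B^2/(2*A) := by
      field_simp
      ring
    linarith

lemma my_ftc {a b x : ℝ} {G g : ℝ → ℝ} {J : ℕ} (hJ : 1 ≤ J) (hx : x ∈ Icc a b)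
    (hG : ∀ θ ∈ Icc a b, HasDerivAt G (g θ) θ) (hgc : ContinuousOn g (Icc a b)) :
    ∫ θ in Ioc x b, G θ ^ (J-1) * g θ = (G b ^ J - G x ^ J)/J := by
  have hxb : x ≤ b := hx.2
  have hGc : ContinuousOn G (Icc a b) := fun θ hθ => (hG θ hθ).continuousAt.continuousWithinAt
  have hw : ContinuousOn (fun θ => G θ^(J-1) * g θ) (Icc a b) := (hGc.pow _).mul hgc
  have hsub : Icc x b ⊆ Icc a b := Icc_subset_Icc hx.1 le_rfl
  have hJ0 : (J:ℝ) ≠ 0 := Nat.cast_ne_zero.2 (by omega)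
  have key : ∫ θ in x..b, G θ^(J-1)*g θ = G b^J/(J:ℝ) - G x^J/(J:ℝ) := by
    apply intervalIntegral.integral_eq_sub_of_hasDerivAt (f := fun θ => G θ^J/(J:ℝ))
    · intro t ht
      rw [uIcc_of_le hxb] at ht
      have h2 := ((hG t (hsub ht)).fun_pow J).div_const (J:ℝ)
      refine h2.congr_deriv ?_
      rw [div_eq_iff hJ0]
      ring
    · apply ContinuousOn.intervalIntegrable
      rw [uIcc_of_le hxb]
      exact hw.mono hsub
  rw [← intervalIntegral.integral_of_le hxb, key]
  ring

lemma my_nonneg_ext {a b : ℝ} (hab : a < b) {g : ℝ → ℝ}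
    (hgc : ContinuousOn g (Icc a b)) (h : ∀ x ∈ Ioo a b, 0 ≤ g x) :
    ∀ x ∈ Icc a b, 0 ≤ g x := by
  intro x hx
  rcases eq_or_ne x a with rfl | hxa
  · haveI hne : (𝓝[Ioo x b] x).NeBot := by
      apply mem_closure_iff_nhdsWithin_neBot.1
      rw [closure_Ioo hab.ne]
      exact ⟨le_rfl, hab.le⟩
    exact ge_of_tendsto ((hgc x hx).mono Ioo_subset_Icc_self)
      (eventually_nhdsWithin_of_forall h)
  rcases eq_or_ne x b with rfl | hxb
  · haveI hne : (𝓝[Ioo a x] x).NeBot := by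
      apply mem_closure_iff_nhdsWithin_neBot.1
      rw [closure_Ioo hab.ne]
      exact ⟨hab.le, le_rfl⟩
    exact ge_of_tendsto ((hgc x hx).mono Ioo_subset_Icc_self)
      (eventually_nhdsWithin_of_forall h)
  · exact h x ⟨lt_of_le_of_ne hx.1 (Ne.symm hxa), lt_of_le_of_ne hx.2 hxb⟩

lemma my_swap {a b : ℝ} (hab : a ≤ b) {ρ w : ℝ → ℝ}
    (hρ : IntegrableOn ρ (Ioc a b)) (hw : IntegrableOn w (Ioc a b)) :
    ∫ θ in Ioc a b, (∫ x in Ioc a θ, ρ x) * w θ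
      = ∫ x in Ioc a b, ρ x * (∫ θ in Ioc x b, w θ) := by
  set μ := volume.restrict (Ioc a b) with hμ
  have hs : MeasurableSet {p : ℝ × ℝ | p.2 ≤ p.1} :=
    measurableSet_le measurable_snd measurable_fst
  set H : ℝ → ℝ → ℝ := fun θ x => ({p : ℝ × ℝ | p.2 ≤ p.1}).indicator
    (fun p => ρ p.2 * w p.1) (θ, x) with hH
  have hint : Integrable (Function.uncurry H) (μ.prod μ) := by
    have h1 : Integrable (fun p : ℝ × ℝ => w p.1 * ρ p.2) (μ.prod μ) :=
      Integrable.mul_prod hw hρ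
    have h2 : Integrable (fun p : ℝ × ℝ => ρ p.2 * w p.1) (μ.prod μ) := by
      simpa [mul_comm] using h1
    have h3 := h2.indicator hs
    have : Function.uncurry H = fun p : ℝ × ℝ => ({p : ℝ × ℝ | p.2 ≤ p.1}).indicator (fun p => ρ p.2 * w p.1) p := by
      funext p; simp [Function.uncurry, hH]
    rw [this]
    exact h3
  have hswap := MeasureTheory.integral_integral_swap hint
  have hL : ∫ θ in Ioc a b, (∫ x in Ioc a θ, ρ x) * w θ = ∫ θ, (∫ x, H θ x ∂μ) ∂μ := by
    rw [hμ]
    refine setIntegral_congr_fun measurableSet_Ioc (fun θ hθ => ?_)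
    have : ∀ x, H θ x = (Iic θ).indicator (fun x => ρ x * w θ) x := by
      intro x; simp [hH, Set.indicator_apply]
    simp_rw [this]
    rw [integral_indicator measurableSet_Iic]
    rw [Measure.restrict_restrict measurableSet_Iic]
    have : Iic θ ∩ Ioc a b = Ioc a θ := by
      ext y; simp only [mem_inter_iff, mem_Iic, mem_Ioc]
      constructor
      · rintro ⟨h1, h2, h3⟩; exact ⟨h2, h1⟩
      · rintro ⟨h1, h2⟩; exact ⟨h2, h1, h2.trans hθ.2⟩
    rw [this, integral_mul_const]
  have hR : ∫ x, (∫ θ, H θ x ∂μ) ∂μ = ∫ x in Ioc a b, ρ x * (∫ θ in Ioc x b, w θ) := by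
    rw [hμ]
    refine setIntegral_congr_fun measurableSet_Ioc (fun x hx => ?_)
    have : ∀ θ, H θ x = (Ici x).indicator (fun θ => ρ x * w θ) θ := by
      intro θ; simp [hH, Set.indicator_apply]
    simp_rw [this]
    rw [integral_indicator measurableSet_Ici]
    rw [Measure.restrict_restrict measurableSet_Ici]
    have h1 : Ici x ∩ Ioc a b = Icc x b := by
      ext y; simp only [mem_inter_iff, mem_Ici, mem_Ioc, mem_Icc]
      constructor
      · rintro ⟨h1, _, h3⟩; exact ⟨h1, h3⟩
      · rintro ⟨h1, h2⟩; exact ⟨h1, lt_of_lt_of_le hx.1 h1, h2⟩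
    rw [h1, integral_const_mul, ← integral_Icc_eq_integral_Ioc]
  rw [hL, hswap, hR]

set_option maxHeartbeats 2000000 in
theorem stmt_3_aux (θL θH lam : ℝ) (J : ℕ) (hJ : 1 ≤ J) (hθ : θL < θH)
    (hlam0 : 0 ≤ lam) (hlam1 : lam < 1)
    (F G f g : ℝ → ℝ)
    (hF : ∀ θ ∈ Set.Icc θL θH, HasDerivAt F (f θ) θ)
    (hG : ∀ θ ∈ Set.Icc θL θH, HasDerivAt G (g θ) θ)
    (hfc : ContinuousOn f (Set.Icc θL θH))
    (hgc : ContinuousOn g (Set.Icc θL θH))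
    (hFrange : ∀ θ ∈ Set.Icc θL θH, F θ ∈ Set.Icc (0:ℝ) 1)
    (hGrange : ∀ θ ∈ Set.Icc θL θH, G θ ∈ Set.Icc (0:ℝ) 1)
    (hFH : F θH = 1) (hGH : G θH = 1)
    (hf0 : ∀ θ ∈ Set.Ioo θL θH, 0 ≤ f θ)
    (hg0 : ∀ θ ∈ Set.Ioo θL θH, 0 < g θ)
    (qhat : ℝ → ℝ)
    (hqhat : ∀ θ, qhat θ =
      max 0 (θ - (1 - lam * F θ ^ J - (1 - lam) * G θ ^ J) /
        ((1 - lam) * (J : ℝ) * G θ ^ (J - 1) * g θ)))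
    (profit : (ℝ → ℝ) → ℝ → ℝ)
    (hprofit : ∀ q u0, profit q u0 =
      (1 - lam) * (∫ θ in θL..θH,
        (θ * q θ - (q θ) ^ 2 / 2 - (u0 + ∫ x in θL..θ, q x)) * (G θ ^ (J - 1) * g θ))
      + lam * (∫ θ in θL..θH,
        (θ ^ 2 / 2 - (u0 + ∫ x in θL..θ, q x)) * (F θ ^ (J - 1) * f θ))) :
    ∀ q : ℝ → ℝ, ∀ u0 : ℝ, Measurable q →
      (∃ C, ∀ θ ∈ Set.Icc θL θH, q θ ≤ C) →
      (∀ θ ∈ Set.Icc θL θH, 0 ≤ q θ) → 0 ≤ u0 →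
      profit q u0 ≤ profit qhat 0 := by
  intro q u0 hqmeas hqbd hq0 hu0
  obtain ⟨C, hC⟩ := hqbd
  have hab : θL ≤ θH := hθ.le
  set S : Set ℝ := Ioc θL θH with hSdef
  have hμS : MeasurableSet S := measurableSet_Ioc
  have hsub : S ⊆ Icc θL θH := Ioc_subset_Icc_self
  have hGc : ContinuousOn G (Icc θL θH) := fun t ht => (hG t ht).continuousAt.continuousWithinAt
  have hFc : ContinuousOn F (Icc θL θH) := fun t ht => (hF t ht).continuousAt.continuousWithinAt
  have hwc : ContinuousOn (fun t => G t^(J-1) * g t) (Icc θL θH) := (hGc.pow _).mul hgc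
  have hvc : ContinuousOn (fun t => F t^(J-1) * f t) (Icc θL θH) := (hFc.pow _).mul hfc
  have h1lam : (0:ℝ) < 1 - lam := by linarith
  have hJpos : (0:ℝ) < (J:ℝ) := by exact_mod_cast Nat.lt_of_lt_of_le Nat.zero_lt_one hJ
  obtain ⟨Cw, hCw⟩ := isCompact_Icc.exists_bound_of_continuousOn hwc
  obtain ⟨Cv, hCv⟩ := isCompact_Icc.exists_bound_of_continuousOn hvc
  have hg0' : ∀ x ∈ Icc θL θH, 0 ≤ g x := my_nonneg_ext hθ hgc (fun x hx => (hg0 x hx).le)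
  have hf0' : ∀ x ∈ Icc θL θH, 0 ≤ f x := my_nonneg_ext hθ hfc hf0
  have hw0 : ∀ t ∈ Icc θL θH, 0 ≤ G t^(J-1)*g t :=
    fun t ht => mul_nonneg (pow_nonneg (hGrange t ht).1 _) (hg0' t ht)
  have hv0 : ∀ t ∈ Icc θL θH, 0 ≤ F t^(J-1)*f t :=
    fun t ht => mul_nonneg (pow_nonneg (hFrange t ht).1 _) (hf0' t ht)
  have hc0 : ∀ t ∈ Icc θL θH, 0 ≤ 1 - lam*F t^J - (1-lam)*G t^J := by
    intro t ht
    obtain ⟨hF0, hF1⟩ := hFrange t ht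
    obtain ⟨hG0, hG1⟩ := hGrange t ht
    have h1 : F t^J ≤ 1 := pow_le_one₀ hF0 hF1
    have h2 : G t^J ≤ 1 := pow_le_one₀ hG0 hG1
    nlinarith
  have hc1 : ∀ t ∈ Icc θL θH, 1 - lam*F t^J - (1-lam)*G t^J ≤ 1 := by
    intro t ht
    obtain ⟨hF0, _⟩ := hFrange t ht
    obtain ⟨hG0, _⟩ := hGrange t ht
    have h1 : 0 ≤ F t^J := pow_nonneg hF0 _
    have h2 : 0 ≤ G t^J := pow_nonneg hG0 _
    nlinarith
  have hGpos : ∀ t ∈ Ioo θL θH, 0 < G t := by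
    intro t ht
    have hmono : StrictMonoOn G (Icc θL θH) := by
      apply strictMonoOn_of_deriv_pos (convex_Icc _ _) hGc
      intro x hx
      rw [interior_Icc] at hx
      rw [(hG x (Ioo_subset_Icc_self hx)).deriv]
      exact hg0 x hx
    have h1 : G θL < G t := hmono ⟨le_rfl, hab⟩ (Ioo_subset_Icc_self ht) ht.1
    have h2 : 0 ≤ G θL := (hGrange θL ⟨le_rfl, hab⟩).1
    linarith
  have hqm : AEStronglyMeasurable q (volume.restrict S) :=
    hqmeas.aestronglyMeasurable.restrict
  have hqhatm : AEStronglyMeasurable qhat (volume.restrict S) := by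
    have hIoosub : Ioo θL θH ⊆ Icc θL θH := Ioo_subset_Icc_self
    have hcont : ContinuousOn qhat (Ioo θL θH) := by
      have h1 : ContinuousOn (fun t => max 0 (t - (1 - lam * F t ^ J - (1 - lam) * G t ^ J) /
          ((1 - lam) * (J : ℝ) * G t ^ (J - 1) * g t))) (Ioo θL θH) := by
        apply ContinuousOn.sup continuousOn_const
        apply ContinuousOn.sub continuousOn_id
        apply ContinuousOn.div
        · exact (continuousOn_const.sub (continuousOn_const.mul ((hFc.mono hIoosub).pow _))).sub
            (continuousOn_const.mul ((hGc.mono hIoosub).pow _))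
        · exact (continuousOn_const.mul ((hGc.mono hIoosub).pow _)).mul (hgc.mono hIoosub)
        · intro t ht
          have : 0 < (1-lam) * (J:ℝ) * G t^(J-1) * g t :=
            mul_pos (mul_pos (mul_pos h1lam hJpos) (pow_pos (hGpos t ht) _)) (hg0 t ht)
          exact this.ne'
      exact h1.congr (fun t _ => hqhat t)
    rw [hSdef, ← Measure.restrict_congr_set Ioo_ae_eq_Ioc]
    exact hcont.aestronglyMeasurable measurableSet_Ioo
  have hqhat0 : ∀ t ∈ Icc θL θH, 0 ≤ qhat t := fun t _ => by
    rw [hqhat]; exact le_max_left _ _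
  have hqhatle : ∀ t ∈ Icc θL θH, qhat t ≤ max 0 θH := by
    intro t ht
    rw [hqhat t]
    apply max_le (le_max_left _ _)
    have hd : 0 ≤ (1-lam) * (J:ℝ) * G t^(J-1) * g t :=
      mul_nonneg (mul_nonneg (mul_nonneg h1lam.le hJpos.le)
        (pow_nonneg (hGrange t ht).1 _)) (hg0' t ht)
    have hdiv : 0 ≤ (1 - lam * F t ^ J - (1 - lam) * G t ^ J) /
        ((1-lam) * (J:ℝ) * G t^(J-1) * g t) := div_nonneg (hc0 t ht) hd
    have h2 : t - (1 - lam * F t ^ J - (1 - lam) * G t ^ J) /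
        ((1-lam) * (J:ℝ) * G t^(J-1) * g t) ≤ θH := by linarith [ht.2]
    exact h2.trans (le_max_right 0 θH)
  set M : ℝ := max |θL| |θH| with hMdef
  have hMt : ∀ t ∈ Icc θL θH, |t| ≤ M := by
    intro t ht
    rw [abs_le]
    constructor
    · have h1 := neg_abs_le θL
      have h2 := le_max_left |θL| |θH|
      linarith [ht.1]
    · have h1 := le_abs_self θH
      have h2 := le_max_right |θL| |θH|
      linarith [ht.2]
  have hwm : AEStronglyMeasurable (fun t => G t^(J-1)*g t) (volume.restrict S) :=
    (hwc.mono hsub).aestronglyMeasurable hμS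
  have hvm : AEStronglyMeasurable (fun t => F t^(J-1)*f t) (volume.restrict S) :=
    (hvc.mono hsub).aestronglyMeasurable hμS
  have hidm : AEStronglyMeasurable (fun t : ℝ => t) (volume.restrict S) :=
    aestronglyMeasurable_id
  have hcm : AEStronglyMeasurable (fun t => 1 - lam*F t^J - (1-lam)*G t^J)
      (volume.restrict S) := by
    have : ContinuousOn (fun t => 1 - lam*F t^J - (1-lam)*G t^J) (Icc θL θH) :=
      (continuousOn_const.sub (continuousOn_const.mul (hFc.pow _))).sub
        (continuousOn_const.mul (hGc.pow _))
    exact (this.mono hsub).aestronglyMeasurable hμS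
  have hcabs : ∀ t ∈ Icc θL θH, |1 - lam*F t^J - (1-lam)*G t^J| ≤ 1 := fun t ht => by
    rw [abs_of_nonneg (hc0 t ht)]; exact hc1 t ht
  have hCw0 : 0 ≤ Cw := le_trans (norm_nonneg _) (hCw θL ⟨le_rfl, hab⟩)
  have hCv0 : 0 ≤ Cv := le_trans (norm_nonneg _) (hCv θL ⟨le_rfl, hab⟩)
  have hM0 : 0 ≤ M := le_trans (abs_nonneg _) (le_max_left |θL| |θH|)
  have intPsi : ∀ ρ : ℝ → ℝ, ∀ D : ℝ, AEStronglyMeasurable ρ (volume.restrict S) →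
      (∀ t ∈ Icc θL θH, 0 ≤ ρ t) → (∀ t ∈ Icc θL θH, ρ t ≤ D) →
      IntegrableOn (fun t => (1-lam) * ((t * ρ t - ρ t^2/2) * (G t^(J-1)*g t))
        - ρ t * (1 - lam*F t^J - (1-lam)*G t^J) / J) S := by
    intro ρ D hm h0 hD
    have hD0 : 0 ≤ D := le_trans (h0 θL ⟨le_rfl, hab⟩) (hD θL ⟨le_rfl, hab⟩)
    have hAESM : AEStronglyMeasurable (fun t => (1-lam) * ((t * ρ t - ρ t^2/2) * (G t^(J-1)*g t))
        - ρ t * (1 - lam*F t^J - (1-lam)*G t^J) / J) (volume.restrict S) := by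
      have hfun : (fun t => (1-lam) * ((t * ρ t - ρ t^2/2) * (G t^(J-1)*g t))
          - ρ t * (1 - lam*F t^J - (1-lam)*G t^J) / J)
          = (fun t => (1-lam) * ((t * ρ t - ρ t * ρ t * (1/2)) * (G t^(J-1)*g t))
          - ρ t * ((1 - lam*F t^J - (1-lam)*G t^J) * (1/(J:ℝ)))) := by
        funext t; ring
      rw [hfun]
      exact ((((hidm.mul hm).sub ((hm.mul hm).mul_const _)).mul hwm).const_mul _).sub
        (hm.mul (hcm.mul_const _))
    apply my_intOn hAESM (K := (1-lam) * ((M*D + D^2/2)*Cw) + D)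
    intro x hx
    have hxI := hsub hx
    have h1 : |ρ x| ≤ D := by rw [abs_of_nonneg (h0 x hxI)]; exact hD x hxI
    have h2 : |x| ≤ M := hMt x hxI
    have h3 : |G x^(J-1)*g x| ≤ Cw := by rw [← Real.norm_eq_abs]; exact hCw x hxI
    have e1 : |x * ρ x - ρ x^2/2| ≤ M*D + D^2/2 := by
      have habs2 : |ρ x^2/2| = ρ x^2/2 := abs_of_nonneg (by positivity)
      have h5 : ρ x^2 ≤ D^2 := pow_le_pow_left₀ (h0 x hxI) (hD x hxI) 2
      have h6 : |x * ρ x| ≤ M*D := by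
        rw [abs_mul]
        exact mul_le_mul h2 h1 (abs_nonneg _) ((abs_nonneg x).trans h2)
      calc |x * ρ x - ρ x^2/2| ≤ |x * ρ x| + |ρ x^2/2| := abs_sub _ _
        _ ≤ M*D + D^2/2 := by rw [habs2]; linarith
    have e2 : |(x * ρ x - ρ x^2/2) * (G x^(J-1)*g x)| ≤ (M*D + D^2/2)*Cw := by
      rw [abs_mul]
      exact mul_le_mul e1 h3 (abs_nonneg _) (le_trans (abs_nonneg _) e1)
    have e3 : |ρ x * (1 - lam*F x^J - (1-lam)*G x^J) / J| ≤ D := by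
      rw [abs_div, abs_mul, abs_of_pos hJpos]
      have h7 : |ρ x| * |1 - lam*F x^J - (1-lam)*G x^J| ≤ D := by
        calc |ρ x| * |1 - lam*F x^J - (1-lam)*G x^J| ≤ D * 1 :=
              mul_le_mul h1 (hcabs x hxI) (abs_nonneg _) hD0
          _ = D := mul_one D
      calc |ρ x| * |1 - lam*F x^J - (1-lam)*G x^J| / (J:ℝ) ≤ D / (J:ℝ) := by gcongr
        _ ≤ D := div_le_self hD0 (by exact_mod_cast hJ)
    calc |(1-lam) * ((x * ρ x - ρ x^2/2) * (G x^(J-1)*g x))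
          - ρ x * (1 - lam*F x^J - (1-lam)*G x^J) / J|
        ≤ |(1-lam) * ((x * ρ x - ρ x^2/2) * (G x^(J-1)*g x))|
          + |ρ x * (1 - lam*F x^J - (1-lam)*G x^J) / J| := abs_sub _ _
      _ ≤ (1-lam) * ((M*D + D^2/2)*Cw) + D := by
          have : |(1-lam) * ((x * ρ x - ρ x^2/2) * (G x^(J-1)*g x))|
              = (1-lam) * |(x * ρ x - ρ x^2/2) * (G x^(J-1)*g x)| := by
            rw [abs_mul, abs_of_pos h1lam]
          rw [this]
          have := mul_le_mul_of_nonneg_left e2 h1lam.le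
          linarith
  have key : ∀ ρ : ℝ → ℝ, ∀ u D : ℝ, AEStronglyMeasurable ρ (volume.restrict S) →
      (∀ t ∈ Icc θL θH, 0 ≤ ρ t) → (∀ t ∈ Icc θL θH, ρ t ≤ D) →
      profit ρ u = lam * (∫ t in S, t^2/2 * (F t^(J-1)*f t))
        + (∫ t in S, ((1-lam) * ((t * ρ t - ρ t^2/2) * (G t^(J-1)*g t))
            - ρ t * (1 - lam*F t^J - (1-lam)*G t^J) / J))
        - u * (1 - lam*F θL^J - (1-lam)*G θL^J) / J := by
    intro ρ u D hm h0 hD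
    have hD0 : 0 ≤ D := le_trans (h0 θL ⟨le_rfl, hab⟩) (hD θL ⟨le_rfl, hab⟩)
    have hρbd : ∀ x ∈ S, |ρ x| ≤ D := fun x hx => by
      rw [abs_of_nonneg (h0 x (hsub hx))]; exact hD x (hsub hx)
    have hρint : IntegrableOn ρ S := my_intOn hm hρbd
    have hρintIcc : IntegrableOn ρ (Icc θL θH) :=
      (integrableOn_Icc_iff_integrableOn_Ioc (by simp)).2 hρint
    have hwint : IntegrableOn (fun t => G t^(J-1)*g t) S :=
      my_intOn hwm (fun x hx => by rw [← Real.norm_eq_abs]; exact hCw x (hsub hx))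
    have hvint : IntegrableOn (fun t => F t^(J-1)*f t) S :=
      my_intOn hvm (fun x hx => by rw [← Real.norm_eq_abs]; exact hCv x (hsub hx))
    -- the primitive U
    have hUc : ContinuousOn (fun t => ∫ x in θL..t, ρ x) (Icc θL θH) := by
      have h' : IntegrableOn ρ (uIcc θL θH) := by
        rw [uIcc_of_le hab]; exact hρintIcc
      have := intervalIntegral.continuousOn_primitive_interval h'
      rwa [uIcc_of_le hab] at this
    have hUm : AEStronglyMeasurable (fun t => ∫ x in θL..t, ρ x) (volume.restrict S) :=
      (hUc.mono hsub).aestronglyMeasurable hμS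
    have hUbd : ∀ t ∈ S, |∫ x in θL..t, ρ x| ≤ D*(θH-θL) := by
      intro t ht
      rw [intervalIntegral.integral_of_le ht.1.le]
      have h1 := norm_setIntegral_le_of_norm_le_const (μ := volume) (s := Ioc θL t)
        (f := ρ) (C := D) measure_Ioc_lt_top
        (fun x hx => by rw [Real.norm_eq_abs]; exact hρbd x ⟨hx.1, hx.2.trans ht.2⟩)
      rw [Real.norm_eq_abs] at h1
      have h2 : volume.real (Ioc θL t) = t - θL := by
        show (volume (Ioc θL t)).toReal = t - θL
        rw [Real.volume_Ioc, ENNReal.toReal_ofReal (by linarith [ht.1.le] : (0:ℝ) ≤ t - θL)]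
      rw [h2] at h1
      calc |∫ x in Ioc θL t, ρ x| ≤ D*(t-θL) := h1
        _ ≤ D*(θH-θL) := mul_le_mul_of_nonneg_left (by linarith [ht.2]) hD0
    -- integrable pieces
    have P1 : IntegrableOn (fun t => (t * ρ t - ρ t^2/2) * (G t^(J-1)*g t)) S := by
      have hAESM : AEStronglyMeasurable (fun t => (t * ρ t - ρ t^2/2) * (G t^(J-1)*g t))
          (volume.restrict S) := by
        have hfun : (fun t => (t * ρ t - ρ t^2/2) * (G t^(J-1)*g t))
            = (fun t => (t * ρ t - ρ t * ρ t * (1/2)) * (G t^(J-1)*g t)) := by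
          funext t; ring
        rw [hfun]
        exact ((hidm.mul hm).sub ((hm.mul hm).mul_const _)).mul hwm
      apply my_intOn hAESM (K := (M*D + D^2/2)*Cw)
      intro x hx
      have hxI := hsub hx
      have h1 : |ρ x| ≤ D := hρbd x hx
      have h2 : |x| ≤ M := hMt x hxI
      have h3 : |G x^(J-1)*g x| ≤ Cw := by rw [← Real.norm_eq_abs]; exact hCw x hxI
      have e1 : |x * ρ x - ρ x^2/2| ≤ M*D + D^2/2 := by
        have habs2 : |ρ x^2/2| = ρ x^2/2 := abs_of_nonneg (by positivity)
        have h5 : ρ x^2 ≤ D^2 := pow_le_pow_left₀ (h0 x hxI) (hD x hxI) 2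
        have h6 : |x * ρ x| ≤ M*D := by
          rw [abs_mul]
          exact mul_le_mul h2 h1 (abs_nonneg _) ((abs_nonneg x).trans h2)
        calc |x * ρ x - ρ x^2/2| ≤ |x * ρ x| + |ρ x^2/2| := abs_sub _ _
          _ ≤ M*D + D^2/2 := by rw [habs2]; linarith
      rw [abs_mul]
      exact mul_le_mul e1 h3 (abs_nonneg _) (le_trans (abs_nonneg _) e1)
    have Pu : IntegrableOn (fun t => (u + ∫ x in θL..t, ρ x) * (G t^(J-1)*g t)) S := by
      have hAESM : AEStronglyMeasurable (fun t => (u + ∫ x in θL..t, ρ x) * (G t^(J-1)*g t))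
          (volume.restrict S) := (aestronglyMeasurable_const.add hUm).mul hwm
      apply my_intOn hAESM (K := (|u| + D*(θH-θL))*Cw)
      intro x hx
      rw [abs_mul]
      have h1 : |u + ∫ t in θL..x, ρ t| ≤ |u| + D*(θH-θL) :=
        le_trans (abs_add_le _ _) (by linarith [hUbd x hx])
      have h3 : |G x^(J-1)*g x| ≤ Cw := by
        rw [← Real.norm_eq_abs]; exact hCw x (hsub hx)
      exact mul_le_mul h1 h3 (abs_nonneg _) (le_trans (abs_nonneg _) h1)
    have P3 : IntegrableOn (fun t => (∫ x in θL..t, ρ x) * (G t^(J-1)*g t)) S := by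
      have hAESM : AEStronglyMeasurable (fun t => (∫ x in θL..t, ρ x) * (G t^(J-1)*g t))
          (volume.restrict S) := hUm.mul hwm
      apply my_intOn hAESM (K := (D*(θH-θL))*Cw)
      intro x hx
      rw [abs_mul]
      have h3 : |G x^(J-1)*g x| ≤ Cw := by
        rw [← Real.norm_eq_abs]; exact hCw x (hsub hx)
      exact mul_le_mul (hUbd x hx) h3 (abs_nonneg _)
        (le_trans (abs_nonneg _) (hUbd x hx))
    have P4 : IntegrableOn (fun t => t^2/2 * (F t^(J-1)*f t)) S := by
      have hAESM : AEStronglyMeasurable (fun t => t^2/2 * (F t^(J-1)*f t))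
          (volume.restrict S) := by
        have hfun : (fun t : ℝ => t^2/2 * (F t^(J-1)*f t))
            = (fun t => (t * t * (1/2)) * (F t^(J-1)*f t)) := by funext t; ring
        rw [hfun]
        exact ((hidm.mul hidm).mul_const _).mul hvm
      apply my_intOn hAESM (K := (M^2/2)*Cv)
      intro x hx
      have hxI := hsub hx
      rw [abs_mul]
      have h2 : |x^2/2| ≤ M^2/2 := by
        rw [abs_div, abs_pow, abs_two]
        have := hMt x hxI
        gcongr
      have h3 : |F x^(J-1)*f x| ≤ Cv := by rw [← Real.norm_eq_abs]; exact hCv x hxI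
      exact mul_le_mul h2 h3 (abs_nonneg _) (le_trans (abs_nonneg _) h2)
    have Puv : IntegrableOn (fun t => (u + ∫ x in θL..t, ρ x) * (F t^(J-1)*f t)) S := by
      have hAESM : AEStronglyMeasurable (fun t => (u + ∫ x in θL..t, ρ x) * (F t^(J-1)*f t))
          (volume.restrict S) := (aestronglyMeasurable_const.add hUm).mul hvm
      apply my_intOn hAESM (K := (|u| + D*(θH-θL))*Cv)
      intro x hx
      rw [abs_mul]
      have h1 : |u + ∫ t in θL..x, ρ t| ≤ |u| + D*(θH-θL) :=
        le_trans (abs_add_le _ _) (by linarith [hUbd x hx])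
      have h3 : |F x^(J-1)*f x| ≤ Cv := by
        rw [← Real.norm_eq_abs]; exact hCv x (hsub hx)
      exact mul_le_mul h1 h3 (abs_nonneg _) (le_trans (abs_nonneg _) h1)
    have P3v : IntegrableOn (fun t => (∫ x in θL..t, ρ x) * (F t^(J-1)*f t)) S := by
      have hAESM : AEStronglyMeasurable (fun t => (∫ x in θL..t, ρ x) * (F t^(J-1)*f t))
          (volume.restrict S) := hUm.mul hvm
      apply my_intOn hAESM (K := (D*(θH-θL))*Cv)
      intro x hx
      rw [abs_mul]
      have h3 : |F x^(J-1)*f x| ≤ Cv := by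
        rw [← Real.norm_eq_abs]; exact hCv x (hsub hx)
      exact mul_le_mul (hUbd x hx) h3 (abs_nonneg _)
        (le_trans (abs_nonneg _) (hUbd x hx))
    have P7 : IntegrableOn (fun x => ρ x * ((1 - G x^J)/J)) S := by
      have hGJm : AEStronglyMeasurable (fun x => (1 - G x^J)*(1/(J:ℝ)))
          (volume.restrict S) :=
        ((continuousOn_const.sub ((hGc.pow J).mono hsub)).aestronglyMeasurable hμS).mul_const _
      have hAESM : AEStronglyMeasurable (fun x => ρ x * ((1 - G x^J)/J))
          (volume.restrict S) := by
        have hfun : (fun x => ρ x * ((1 - G x^J)/J))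
            = fun x => ρ x * ((1 - G x^J)*(1/(J:ℝ))) := by funext x; ring
        rw [hfun]
        exact hm.mul hGJm
      apply my_intOn hAESM (K := D)
      intro x hx
      have hxI := hsub hx
      rw [abs_mul]
      have h1 : |ρ x| ≤ D := hρbd x hx
      have h2 : |(1 - G x^J)/(J:ℝ)| ≤ 1 := by
        rw [abs_div, abs_of_pos hJpos]
        have hg1 : 0 ≤ 1 - G x^J := by
          have := pow_le_one₀ (n := J) (hGrange x hxI).1 (hGrange x hxI).2
          linarith
        have hg2 : 1 - G x^J ≤ 1 := by
          have := pow_nonneg (hGrange x hxI).1 J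
          linarith
        rw [abs_of_nonneg hg1]
        calc (1 - G x^J)/(J:ℝ) ≤ 1/(J:ℝ) := by gcongr
          _ ≤ 1 := by
            rw [div_le_one hJpos]
            exact_mod_cast hJ
      calc |ρ x| * |(1 - G x^J)/(J:ℝ)| ≤ D * 1 :=
            mul_le_mul h1 h2 (abs_nonneg _) hD0
        _ = D := mul_one D
    have P8 : IntegrableOn (fun x => ρ x * ((1 - F x^J)/J)) S := by
      have hFJm : AEStronglyMeasurable (fun x => (1 - F x^J)*(1/(J:ℝ)))
          (volume.restrict S) :=
        ((continuousOn_const.sub ((hFc.pow J).mono hsub)).aestronglyMeasurable hμS).mul_const _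
      have hAESM : AEStronglyMeasurable (fun x => ρ x * ((1 - F x^J)/J))
          (volume.restrict S) := by
        have hfun : (fun x => ρ x * ((1 - F x^J)/J))
            = fun x => ρ x * ((1 - F x^J)*(1/(J:ℝ))) := by funext x; ring
        rw [hfun]
        exact hm.mul hFJm
      apply my_intOn hAESM (K := D)
      intro x hx
      have hxI := hsub hx
      rw [abs_mul]
      have h1 : |ρ x| ≤ D := hρbd x hx
      have h2 : |(1 - F x^J)/(J:ℝ)| ≤ 1 := by
        rw [abs_div, abs_of_pos hJpos]
        have hg1 : 0 ≤ 1 - F x^J := by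
          have := pow_le_one₀ (n := J) (hFrange x hxI).1 (hFrange x hxI).2
          linarith
        have hg2 : 1 - F x^J ≤ 1 := by
          have := pow_nonneg (hFrange x hxI).1 J
          linarith
        rw [abs_of_nonneg hg1]
        calc (1 - F x^J)/(J:ℝ) ≤ 1/(J:ℝ) := by gcongr
          _ ≤ 1 := by
            rw [div_le_one hJpos]
            exact_mod_cast hJ
      calc |ρ x| * |(1 - F x^J)/(J:ℝ)| ≤ D * 1 :=
            mul_le_mul h1 h2 (abs_nonneg _) hD0
        _ = D := mul_one D
    -- first integral
    have E1 : (∫ t in θL..θH,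
          (t * ρ t - ρ t ^ 2 / 2 - (u + ∫ x in θL..t, ρ x)) * (G t ^ (J - 1) * g t))
        = (∫ t in S, (t * ρ t - ρ t^2/2) * (G t^(J-1)*g t))
          - (u * ((1 - G θL^J)/J) + ∫ x in S, ρ x * ((1 - G x^J)/J)) := by
      rw [intervalIntegral.integral_of_le hab]
      have step1 : ∫ t in S,
            (t * ρ t - ρ t ^ 2 / 2 - (u + ∫ x in θL..t, ρ x)) * (G t ^ (J - 1) * g t)
          = ∫ t in S, ((t * ρ t - ρ t^2/2) * (G t^(J-1)*g t)
            - (u + ∫ x in θL..t, ρ x) * (G t^(J-1)*g t)) := by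
        apply setIntegral_congr_fun hμS
        intro t _
        beta_reduce
        ring
      rw [step1, integral_sub P1 Pu]
      congr 1
      have step2 : ∫ t in S, (u + ∫ x in θL..t, ρ x) * (G t^(J-1)*g t)
          = ∫ t in S, (u * (G t^(J-1)*g t)
            + (∫ x in θL..t, ρ x) * (G t^(J-1)*g t)) := by
        apply setIntegral_congr_fun hμS
        intro t _
        beta_reduce
        ring
      rw [step2, integral_add (hwint.const_mul u) P3, integral_const_mul]
      congr 1
      · congr 1
        have := my_ftc (x := θL) hJ ⟨le_rfl, hab⟩ hG hgc
        rw [this, hGH, one_pow]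
      · have step3 : ∫ t in S, (∫ x in θL..t, ρ x) * (G t^(J-1)*g t)
            = ∫ t in S, (∫ x in Ioc θL t, ρ x) * (G t^(J-1)*g t) := by
          apply setIntegral_congr_fun hμS
          intro t ht
          beta_reduce
          rw [intervalIntegral.integral_of_le ht.1.le]
        rw [step3, my_swap hab hρint hwint]
        apply setIntegral_congr_fun hμS
        intro x hx
        beta_reduce
        rw [my_ftc hJ (hsub hx) hG hgc, hGH, one_pow]
    -- second integral
    have E2 : (∫ t in θL..θH,
          (t ^ 2 / 2 - (u + ∫ x in θL..t, ρ x)) * (F t ^ (J - 1) * f t))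
        = (∫ t in S, t^2/2 * (F t^(J-1)*f t))
          - (u * ((1 - F θL^J)/J) + ∫ x in S, ρ x * ((1 - F x^J)/J)) := by
      rw [intervalIntegral.integral_of_le hab]
      have step1 : ∫ t in S,
            (t ^ 2 / 2 - (u + ∫ x in θL..t, ρ x)) * (F t ^ (J - 1) * f t)
          = ∫ t in S, (t^2/2 * (F t^(J-1)*f t)
            - (u + ∫ x in θL..t, ρ x) * (F t^(J-1)*f t)) := by
        apply setIntegral_congr_fun hμS
        intro t _
        beta_reduce
        ring
      rw [step1, integral_sub P4 Puv]
      congr 1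
      have step2 : ∫ t in S, (u + ∫ x in θL..t, ρ x) * (F t^(J-1)*f t)
          = ∫ t in S, (u * (F t^(J-1)*f t)
            + (∫ x in θL..t, ρ x) * (F t^(J-1)*f t)) := by
        apply setIntegral_congr_fun hμS
        intro t _
        beta_reduce
        ring
      rw [step2, integral_add (hvint.const_mul u) P3v, integral_const_mul]
      congr 1
      · congr 1
        have := my_ftc (x := θL) hJ ⟨le_rfl, hab⟩ hF hfc
        rw [this, hFH, one_pow]
      · have step3 : ∫ t in S, (∫ x in θL..t, ρ x) * (F t^(J-1)*f t)
            = ∫ t in S, (∫ x in Ioc θL t, ρ x) * (F t^(J-1)*f t) := by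
          apply setIntegral_congr_fun hμS
          intro t ht
          beta_reduce
          rw [intervalIntegral.integral_of_le ht.1.le]
        rw [step3, my_swap hab hρint hvint]
        apply setIntegral_congr_fun hμS
        intro x hx
        beta_reduce
        rw [my_ftc hJ (hsub hx) hF hfc, hFH, one_pow]
    -- combine Psi
    have E3 : (∫ t in S, ((1-lam) * ((t * ρ t - ρ t^2/2) * (G t^(J-1)*g t))
            - ρ t * (1 - lam*F t^J - (1-lam)*G t^J) / J))
        = (1-lam)*(∫ t in S, (t * ρ t - ρ t^2/2) * (G t^(J-1)*g t))
          - ((1-lam)*(∫ x in S, ρ x * ((1 - G x^J)/J))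
             + lam*(∫ x in S, ρ x * ((1 - F x^J)/J))) := by
      have stepA : ∫ t in S, ((1-lam) * ((t * ρ t - ρ t^2/2) * (G t^(J-1)*g t))
            - ρ t * (1 - lam*F t^J - (1-lam)*G t^J) / J)
          = ∫ t in S, ((1-lam) * ((t * ρ t - ρ t^2/2) * (G t^(J-1)*g t))
            - ((1-lam) * (ρ t * ((1 - G t^J)/J)) + lam * (ρ t * ((1 - F t^J)/J)))) := by
        apply setIntegral_congr_fun hμS
        intro t _
        beta_reduce
        have hJ0 : (J:ℝ) ≠ 0 := hJpos.ne'
        field_simp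
        ring
      have PA : IntegrableOn (fun t => (1-lam) * (ρ t * ((1 - G t^J)/J))
          + lam * (ρ t * ((1 - F t^J)/J))) S :=
        (P7.const_mul (1-lam)).add (P8.const_mul lam)
      rw [stepA, integral_sub (P1.const_mul (1-lam)) PA,
        integral_add (P7.const_mul (1-lam)) (P8.const_mul lam), integral_const_mul,
        integral_const_mul, integral_const_mul]
    rw [hprofit ρ u, E1, E2, E3]
    have hJ0 : (J:ℝ) ≠ 0 := hJpos.ne'
    ring
  have hmono : (∫ t in S, ((1-lam) * ((t * q t - q t^2/2) * (G t^(J-1)*g t))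
            - q t * (1 - lam*F t^J - (1-lam)*G t^J) / J))
      ≤ (∫ t in S, ((1-lam) * ((t * qhat t - qhat t^2/2) * (G t^(J-1)*g t))
            - qhat t * (1 - lam*F t^J - (1-lam)*G t^J) / J)) := by
    have hIq := intPsi q C hqm hq0 hC
    have hIqh := intPsi qhat (max 0 θH) hqhatm hqhat0 hqhatle
    apply integral_mono_ae hIq hIqh
    have hne : ∀ᵐ t ∂(volume.restrict S), t ≠ θH := by
      refine ae_iff.2 ?_
      have hset : {t : ℝ | ¬ t ≠ θH} = {θH} := by ext t; simp
      rw [hset]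
      refine le_antisymm ?_ (by simp)
      calc (volume.restrict S) {θH} ≤ volume {θH} := Measure.restrict_apply_le _ _
        _ = 0 := Real.volume_singleton
    filter_upwards [ae_restrict_mem hμS, hne] with t htS htne
    have htoo : t ∈ Ioo θL θH := ⟨htS.1, lt_of_le_of_ne htS.2 htne⟩
    have htI : t ∈ Icc θL θH := hsub htS
    have hApos : 0 < (1-lam) * (G t^(J-1) * g t) :=
      mul_pos h1lam (mul_pos (pow_pos (hGpos t htoo) _) (hg0 t htoo))
    have hrw : ∀ s : ℝ, (1-lam) * ((t * s - s^2/2) * (G t^(J-1)*g t))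
        - s * (1 - lam*F t^J - (1-lam)*G t^J) / J
        = (t * ((1-lam) * (G t^(J-1)*g t)) - (1 - lam*F t^J - (1-lam)*G t^J)/J) * s
          - ((1-lam) * (G t^(J-1)*g t)) * s^2/2 := by
      intro s; ring
    have hq' : qhat t = max 0 ((t * ((1-lam) * (G t^(J-1)*g t))
        - (1 - lam*F t^J - (1-lam)*G t^J)/J) / ((1-lam) * (G t^(J-1)*g t))) := by
      rw [hqhat t]
      congr 1
      have hd : (1 - lam) * (J:ℝ) * G t^(J-1) * g t
          = (J:ℝ) * ((1-lam) * (G t^(J-1)*g t)) := by ring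
      rw [hd]
      have hApos' := hApos
      generalize hA : (1-lam) * (G t^(J-1)*g t) = A at hApos' ⊢
      generalize hc' : 1 - lam*F t^J - (1-lam)*G t^J = c0
      have hJ' : (J:ℝ) ≠ 0 := hJpos.ne'
      field_simp [hApos'.ne']
    rw [hrw (q t), hrw (qhat t), hq']
    exact my_quad hApos (hq0 t htI)
  have hpos : 0 ≤ u0 * (1 - lam*F θL^J - (1-lam)*G θL^J) / J :=
    div_nonneg (mul_nonneg hu0 (hc0 θL ⟨le_rfl, hab⟩)) hJpos.le
  rw [key q u0 C hqm hq0 hC, key qhat 0 (max 0 θH) hqhatm hqhat0 hqhatle]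
  have h00 : (0:ℝ) * (1 - lam*F θL^J - (1-lam)*G θL^J) / J = 0 := by ring
  rw [h00]
  linarith


/-- The quality schedule
`q̂*(θ) = max{0, θ − (1 − λF^J − (1−λ)G^J)/((1−λ)·J·G^{J−1}·g)}`
together with zero rent at the bottom maximizes the seller's combined on- and
off-platform profit
`Π(q,u0) = (1−λ)∫[θq − q²/2 − U]·G^{J−1}g + λ∫[θ²/2 − U]·F^{J−1}f`,
where `U(θ) = u0 + ∫_{θL}^{θ} q`, over measurable bounded nonnegative `q` and `u0 ≥ 0`. -/
theorem stmt_3 (θL θH lam : ℝ) (J : ℕ) (hJ : 1 ≤ J) (hθ : θL < θH)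
    (hlam0 : 0 ≤ lam) (hlam1 : lam < 1)
    (F G f g : ℝ → ℝ)
    (hF : ∀ θ ∈ Set.Icc θL θH, HasDerivAt F (f θ) θ)
    (hG : ∀ θ ∈ Set.Icc θL θH, HasDerivAt G (g θ) θ)
    (hfc : ContinuousOn f (Set.Icc θL θH))
    (hgc : ContinuousOn g (Set.Icc θL θH))
    (hFrange : ∀ θ ∈ Set.Icc θL θH, F θ ∈ Set.Icc (0:ℝ) 1)
    (hGrange : ∀ θ ∈ Set.Icc θL θH, G θ ∈ Set.Icc (0:ℝ) 1)
    (hFH : F θH = 1) (hGH : G θH = 1)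
    (hf0 : ∀ θ ∈ Set.Ioo θL θH, 0 ≤ f θ)
    (hg0 : ∀ θ ∈ Set.Ioo θL θH, 0 < g θ)
    (qhat : ℝ → ℝ)
    (hqhat : ∀ θ, qhat θ =
      max 0 (θ - (1 - lam * F θ ^ J - (1 - lam) * G θ ^ J) /
        ((1 - lam) * (J : ℝ) * G θ ^ (J - 1) * g θ)))
    (profit : (ℝ → ℝ) → ℝ → ℝ)
    (hprofit : ∀ q u0, profit q u0 =
      (1 - lam) * (∫ θ in θL..θH,
        (θ * q θ - (q θ) ^ 2 / 2 - (u0 + ∫ x in θL..θ, q x)) * (G θ ^ (J - 1) * g θ))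
      + lam * (∫ θ in θL..θH,
        (θ ^ 2 / 2 - (u0 + ∫ x in θL..θ, q x)) * (F θ ^ (J - 1) * f θ))) :
    ∀ q : ℝ → ℝ, ∀ u0 : ℝ, Measurable q →
      (∃ C, ∀ θ ∈ Set.Icc θL θH, q θ ≤ C) →
      (∀ θ ∈ Set.Icc θL θH, 0 ≤ q θ) → 0 ≤ u0 →
      profit q u0 ≤ profit qhat 0 :=
  stmt_3_aux θL θH lam J hJ hθ hlam0 hlam1 F G f g hF hG hfc hgc hFrange hGrange
    hFH hGH hf0 hg0 qhat hqhat profit hprofit
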